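/- If R is commutative, S is a set-presentable class of finitely presented R-modules containing R, and S ⊆ tr(S), then every S-pure projective R-module is S-pure flat. -/

import Mathlib

open Function LinearMap

universe u

variable {R : Type u}

section Defs
variable [Ring R]

/-- The lifting property defining `S`-purity of an epimorphism `g`. -/
def SPureLift (S : Set (ModuleCat.{u} R)) {B C : Type u} [AddCommGroup B] [Module R B]
    [AddCommGroup C] [Module R C] (g : B →ₗ[R] C) : Prop :=
  ∀ U ∈ S, ∀ h : U →ₗ[R] C, ∃ h' : U →ₗ[R] B, g ∘ₗ h' = h

/-- `0 → A → B → C → 0` is an `S`-pure exact sequence. -/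
def IsSPureExact (S : Set (ModuleCat.{u} R)) {A B C : Type u} [AddCommGroup A] [Module R A]
    [AddCommGroup B] [Module R B] [AddCommGroup C] [Module R C]
    (f : A →ₗ[R] B) (g : B →ₗ[R] C) : Prop :=
  Function.Injective f ∧ Function.Surjective g ∧ Function.Exact f g ∧ SPureLift S g

/-- `E` is `S`-pure injective. -/
def IsSPureInjective (S : Set (ModuleCat.{u} R)) (E : Type u) [AddCommGroup E]
    [Module R E] : Prop :=
  ∀ ⦃A B C : Type u⦄ [AddCommGroup A] [Module R A] [AddCommGroup B] [Module R B]
    [AddCommGroup C] [Module R C] (f : A →ₗ[R] B) (g : B →ₗ[R] C),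
    IsSPureExact S f g → ∀ h : A →ₗ[R] E, ∃ h' : B →ₗ[R] E, h' ∘ₗ f = h

/-- `P` is `S`-pure projective. -/
def IsSPureProjective (S : Set (ModuleCat.{u} R)) (P : Type u) [AddCommGroup P]
    [Module R P] : Prop :=
  ∀ ⦃A B C : Type u⦄ [AddCommGroup A] [Module R A] [AddCommGroup B] [Module R B]
    [AddCommGroup C] [Module R C] (f : A →ₗ[R] B) (g : B →ₗ[R] C),
    IsSPureExact S f g → ∀ h : P →ₗ[R] C, ∃ h' : P →ₗ[R] B, g ∘ₗ h' = h

/-- `N` is an `S`-pure submodule of `M`. -/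
def IsSPureSubmodule (S : Set (ModuleCat.{u} R)) {M : Type u} [AddCommGroup M] [Module R M]
    (N : Submodule R M) : Prop :=
  SPureLift S N.mkQ

/-- `φ` is an `S`-pure monomorphism. -/
def IsSPureMono (S : Set (ModuleCat.{u} R)) {M E : Type u} [AddCommGroup M] [Module R M]
    [AddCommGroup E] [Module R E] (φ : M →ₗ[R] E) : Prop :=
  Function.Injective φ ∧ IsSPureSubmodule S (LinearMap.range φ)

/-- `M` is an `S`-pure essential extension of its submodule `N`. -/
def IsSPureEssentialExtension (S : Set (ModuleCat.{u} R)) {M : Type u} [AddCommGroup M]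
    [Module R M] (N : Submodule R M) : Prop :=
  IsSPureSubmodule S N ∧
    ∀ ⦃L : Type u⦄ [AddCommGroup L] [Module R L] (φ : M →ₗ[R] L),
      IsSPureMono S (φ ∘ₗ N.subtype) → Function.Injective φ

/-- `M` is a maximal `S`-pure essential extension of its submodule `N` : `M` is an
`S`-pure essential extension of `N` and no proper extension of `M` is an `S`-pure essential
extension of (the image of) `N`. -/
def IsMaxSPureEssentialExtension (S : Set (ModuleCat.{u} R)) {M : Type u} [AddCommGroup M]
    [Module R M] (N : Submodule R M) : Prop :=
  IsSPureEssentialExtension S N ∧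
    ∀ ⦃L : Type u⦄ [AddCommGroup L] [Module R L] (ι : M →ₗ[R] L), Function.Injective ι →
      IsSPureEssentialExtension S (LinearMap.range (ι ∘ₗ N.subtype)) → Function.Surjective ι

end Defs

section FlatDefs
variable [CommRing R]

/-- A (right) `R`-module `F` is `S`-pure flat. -/
def IsSPureFlat (S : Set (ModuleCat.{u} R)) (F : Type u) [AddCommGroup F]
    [Module R F] : Prop :=
  ∀ ⦃A B C : Type u⦄ [AddCommGroup A] [Module R A] [AddCommGroup B] [Module R B]
    [AddCommGroup C] [Module R C] (f : A →ₗ[R] B) (g : B →ₗ[R] C),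
    IsSPureExact S f g → Function.Injective (LinearMap.lTensor F f)

end FlatDefs

section Aux

open TensorProduct

variable (R) [CommRing R]

/-- The canonical map `(Fin k → M) → (Fin k → R) ⊗ M`. -/
noncomputable def piT (k : ℕ) (M : Type u) [AddCommGroup M] [Module R M] :
    (Fin k → M) →ₗ[R] ((Fin k → R) ⊗[R] M) :=
  ∑ i : Fin k, (TensorProduct.mk R (Fin k → R) M (Pi.single i 1)) ∘ₗ
    (LinearMap.proj i : (Fin k → M) →ₗ[R] M)

lemma piT_apply (k : ℕ) (M : Type u) [AddCommGroup M] [Module R M] (c : Fin k → M) :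
    piT R k M c = ∑ i : Fin k, (Pi.single i 1 : Fin k → R) ⊗ₜ[R] c i := by
  simp [piT]

/-- The `i`-th coordinate map `(Fin k → R) ⊗ M → M`. -/
noncomputable def coordT (k : ℕ) (M : Type u) [AddCommGroup M] [Module R M] (i : Fin k) :
    ((Fin k → R) ⊗[R] M) →ₗ[R] M :=
  TensorProduct.lift ((LinearMap.lsmul R M) ∘ₗ
    (LinearMap.proj i : (Fin k → R) →ₗ[R] R))

lemma coordT_tmul (k : ℕ) (M : Type u) [AddCommGroup M] [Module R M] (i : Fin k)
    (x : Fin k → R) (a : M) : coordT R k M i (x ⊗ₜ[R] a) = x i • a := rfl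

lemma coordT_piT (k : ℕ) (M : Type u) [AddCommGroup M] [Module R M] (i : Fin k)
    (c : Fin k → M) : coordT R k M i (piT R k M c) = c i := by
  classical
  rw [piT_apply, map_sum]
  simp only [coordT_tmul, Pi.single_apply]
  simp [Finset.sum_ite_eq]

lemma sum_single_smul (k : ℕ) (x : Fin k → R) :
    ∑ i : Fin k, x i • (Pi.single i 1 : Fin k → R) = x := by
  classical
  funext j
  simp [Pi.single_apply, Finset.sum_apply]

lemma piT_surjective (k : ℕ) (M : Type u) [AddCommGroup M] [Module R M] :
    Function.Surjective (piT R k M) := by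
  intro z
  induction z using TensorProduct.induction_on with
  | zero => exact ⟨0, map_zero _⟩
  | tmul x a =>
      refine ⟨fun i => x i • a, ?_⟩
      rw [piT_apply]
      calc ∑ i : Fin k, (Pi.single i 1 : Fin k → R) ⊗ₜ[R] (x i • a)
          = ∑ i : Fin k, (x i • (Pi.single i 1 : Fin k → R)) ⊗ₜ[R] a := by
            simp [tmul_smul, smul_tmul']
        _ = (∑ i : Fin k, x i • (Pi.single i 1 : Fin k → R)) ⊗ₜ[R] a := by
            rw [sum_tmul]
        _ = x ⊗ₜ[R] a := by rw [sum_single_smul]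
  | add z₁ z₂ h₁ h₂ =>
      obtain ⟨c₁, rfl⟩ := h₁
      obtain ⟨c₂, rfl⟩ := h₂
      exact ⟨c₁ + c₂, map_add _ _ _⟩

lemma piT_lTensor (k : ℕ) {A B : Type u} [AddCommGroup A] [Module R A]
    [AddCommGroup B] [Module R B] (f : A →ₗ[R] B) (c : Fin k → A) :
    LinearMap.lTensor (Fin k → R) f (piT R k A c) = piT R k B (fun i => f (c i)) := by
  rw [piT_apply, map_sum, piT_apply]
  simp

lemma piT_rTensor (k n : ℕ) (m : Fin k → Fin n → R) {B : Type u} [AddCommGroup B]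
    [Module R B] (c : Fin n → B) :
    LinearMap.rTensor B (Matrix.mulVecLin (Matrix.of m)) (piT R n B c) =
      piT R k B (fun i => ∑ j : Fin n, m i j • c j) := by
  classical
  rw [piT_apply, map_sum, piT_apply]
  have h1 : ∀ j : Fin n, (Matrix.mulVecLin (Matrix.of m)) (Pi.single j 1)
      = ∑ i : Fin k, m i j • (Pi.single i 1 : Fin k → R) := by
    intro j
    rw [sum_single_smul]
    funext i
    simp [Matrix.mulVecLin_apply, Matrix.mulVec_single_one]
  calc ∑ j : Fin n,
        LinearMap.rTensor B (Matrix.mulVecLin (Matrix.of m))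
          ((Pi.single j 1 : Fin n → R) ⊗ₜ[R] c j)
      = ∑ j : Fin n, ∑ i : Fin k,
          (Pi.single i 1 : Fin k → R) ⊗ₜ[R] (m i j • c j) := by
        refine Finset.sum_congr rfl fun j _ => ?_
        rw [LinearMap.rTensor_tmul, h1, sum_tmul]
        refine Finset.sum_congr rfl fun i _ => ?_
        rw [smul_tmul]
    _ = ∑ i : Fin k, (Pi.single i 1 : Fin k → R) ⊗ₜ[R] (∑ j : Fin n, m i j • c j) := by
        rw [Finset.sum_comm]
        refine Finset.sum_congr rfl fun i _ => ?_
        rw [tmul_sum]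

lemma lTensor_inj_of_retract {P Q A B : Type u} [AddCommGroup P] [Module R P]
    [AddCommGroup Q] [Module R Q] [AddCommGroup A] [Module R A]
    [AddCommGroup B] [Module R B] (f : A →ₗ[R] B) (σ : P →ₗ[R] Q) (pr : Q →ₗ[R] P)
    (hretr : pr ∘ₗ σ = LinearMap.id) (hQ : Function.Injective (LinearMap.lTensor Q f)) :
    Function.Injective (LinearMap.lTensor P f) := by
  have h1 : Function.Injective (LinearMap.rTensor A σ) := by
    have hc : LinearMap.rTensor A pr ∘ₗ LinearMap.rTensor A σ = LinearMap.id := by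
      rw [← LinearMap.rTensor_comp, hretr, LinearMap.rTensor_id]
    intro x y hxy
    have h2 := congrArg (LinearMap.rTensor A pr) hxy
    rwa [← LinearMap.comp_apply, ← LinearMap.comp_apply (LinearMap.rTensor A pr), hc,
      LinearMap.id_apply, LinearMap.id_apply] at h2
  have hsq : LinearMap.lTensor Q f ∘ₗ LinearMap.rTensor A σ
      = LinearMap.rTensor B σ ∘ₗ LinearMap.lTensor P f := by
    rw [LinearMap.lTensor_comp_rTensor, LinearMap.rTensor_comp_lTensor]
  intro x y hxy
  apply h1
  apply hQ
  have hx := LinearMap.congr_fun hsq x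
  have hy := LinearMap.congr_fun hsq y
  simp only [LinearMap.comp_apply] at hx hy
  rw [hx, hy, hxy]

lemma dsum_lTensor_inj {ι : Type u} [DecidableEq ι] (M : ι → Type u)
    [∀ i, AddCommGroup (M i)] [∀ i, Module R (M i)]
    {A B : Type u} [AddCommGroup A] [Module R A] [AddCommGroup B] [Module R B]
    (f : A →ₗ[R] B) (h : ∀ i, Function.Injective (LinearMap.lTensor (M i) f)) :
    Function.Injective (LinearMap.lTensor (DirectSum ι fun i => M i) f) := by
  set eA := TensorProduct.directSumLeft R R M A with heA
  set eB := TensorProduct.directSumLeft R R M B with heB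
  set G : (DirectSum ι fun i => M i ⊗[R] A) →ₗ[R] (DirectSum ι fun i => M i ⊗[R] B) :=
    DFinsupp.mapRange.linearMap (fun i => LinearMap.lTensor (M i) f) with hG
  have hGapp : ∀ (x : DirectSum ι fun i => M i ⊗[R] A) (i : ι),
      G x i = LinearMap.lTensor (M i) f (x i) := by
    intro x i
    rfl
  have hGinj : Function.Injective G := by
    intro x y hxy
    refine DFinsupp.ext fun i => ?_
    apply h i
    rw [← hGapp, ← hGapp, hxy]
  have hsq : eB.toLinearMap ∘ₗ LinearMap.lTensor (DirectSum ι fun i => M i) f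
      = G ∘ₗ eA.toLinearMap := by
    apply TensorProduct.ext'
    intro x a
    induction x using DirectSum.induction_on with
    | zero => simp
    | of i xi =>
        simp only [LinearMap.comp_apply, LinearEquiv.coe_coe, LinearMap.lTensor_tmul, heA, heB,
          ← DirectSum.lof_eq_of R, TensorProduct.directSumLeft_tmul_lof]
        refine DFinsupp.ext fun i' => ?_
        rw [hGapp]
        by_cases hii : i = i'
        · subst hii
          rw [DirectSum.lof_eq_of, DirectSum.of_eq_same, DirectSum.lof_eq_of,
            DirectSum.of_eq_same, LinearMap.lTensor_tmul]
        · rw [DirectSum.lof_eq_of, DirectSum.of_eq_of_ne _ _ _ (Ne.symm hii), DirectSum.lof_eq_of,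
            DirectSum.of_eq_of_ne _ _ _ (Ne.symm hii), map_zero]
    | add x y hx hy =>
        simp only [TensorProduct.add_tmul, map_add] at *
        rw [hx, hy]
  intro x y hxy
  have h1 : G (eA x) = G (eA y) := by
    have hx := LinearMap.congr_fun hsq x
    have hy := LinearMap.congr_fun hsq y
    simp only [LinearMap.comp_apply, LinearEquiv.coe_coe] at hx hy
    rw [← hx, ← hy, hxy]
  exact eA.injective (hGinj h1)

/-- Core lemma: the standard transpose module is flat relative to a sequence that is
pure with respect to `V`. -/
lemma std_inj {A B C V : Type u} [AddCommGroup A] [Module R A] [AddCommGroup B]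
    [Module R B] [AddCommGroup C] [Module R C] [AddCommGroup V] [Module R V]
    (f : A →ₗ[R] B) (g : B →ₗ[R] C) (hfinj : Function.Injective f)
    (hfg : Function.Exact f g)
    (k n : ℕ) (m : Fin k → Fin n → R) (pi : (Fin n → R) →ₗ[R] V)
    (hpi : Function.Surjective pi) (hker : LinearMap.ker pi = Submodule.span R (Set.range m))
    (hlift : ∀ h : V →ₗ[R] C, ∃ h' : V →ₗ[R] B, g ∘ₗ h' = h) :
    Function.Injective (LinearMap.lTensor
      ((Fin k → R) ⧸ Submodule.span R (Set.range fun j : Fin n => fun i : Fin k => m i j)) f) := by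
  classical
  set N : Submodule R (Fin k → R) :=
    Submodule.span R (Set.range fun j : Fin n => fun i : Fin k => m i j) with hN
  set t : (Fin n → R) →ₗ[R] (Fin k → R) := Matrix.mulVecLin (Matrix.of m) with ht
  have hrange_t : LinearMap.range t = N := by
    rw [ht, Matrix.range_mulVecLin, hN]
    rfl
  have hexact_tp : Function.Exact t N.mkQ := by
    rw [LinearMap.exact_iff, Submodule.ker_mkQ, hrange_t]
  -- the key element-wise statement, using purity with respect to V
  have key : ∀ (a : Fin k → A) (b : Fin n → B),
      (∀ i, f (a i) = ∑ j : Fin n, m i j • b j) →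
      ∃ a' : Fin n → A, ∀ i, a i = ∑ j : Fin n, m i j • a' j := by
    intro a b hab
    set h₀ : (Fin n → R) →ₗ[R] C :=
      ∑ j : Fin n, (LinearMap.toSpanSingleton R C (g (b j))) ∘ₗ
        (LinearMap.proj j : (Fin n → R) →ₗ[R] R) with hh₀
    have hh₀_apply : ∀ x : Fin n → R, h₀ x = ∑ j : Fin n, x j • g (b j) := by
      intro x; simp [hh₀, LinearMap.toSpanSingleton_apply]
    have hle : LinearMap.ker pi ≤ LinearMap.ker h₀ := by
      rw [hker, Submodule.span_le]
      rintro _ ⟨i, rfl⟩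
      rw [SetLike.mem_coe, LinearMap.mem_ker, hh₀_apply]
      have he : ∑ j : Fin n, m i j • g (b j) = g (∑ j : Fin n, m i j • b j) := by
        rw [map_sum]; simp
      rw [he, ← hab i, hfg.apply_apply_eq_zero]
    set eV := LinearMap.quotKerEquivOfSurjective pi hpi with heV
    set h : V →ₗ[R] C := (Submodule.liftQ (LinearMap.ker pi) h₀ hle) ∘ₗ
      eV.symm.toLinearMap with hh
    have hhpi : ∀ x : Fin n → R, h (pi x) = h₀ x := by
      intro x
      have hmk : eV.symm (pi x) = Submodule.Quotient.mk x := by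
        apply eV.injective
        rw [LinearEquiv.apply_symm_apply]
        simp [heV, LinearMap.quotKerEquivOfSurjective]
      rw [hh, LinearMap.comp_apply, LinearEquiv.coe_coe, hmk, Submodule.liftQ_apply]
    obtain ⟨h', hh'⟩ := hlift h
    set b' : Fin n → B := fun j => h' (pi (Pi.single j 1)) with hb'
    have hgb' : ∀ j, g (b' j) = g (b j) := by
      intro j
      have hcf := LinearMap.congr_fun hh' (pi (Pi.single j 1))
      rw [LinearMap.comp_apply] at hcf
      rw [hb', hcf, hhpi, hh₀_apply]
      simp [Pi.single_apply]
    have hrel : ∀ i, ∑ j : Fin n, m i j • b' j = 0 := by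
      intro i
      have hmem : m i ∈ LinearMap.ker pi := by
        rw [hker]; exact Submodule.subset_span ⟨i, rfl⟩
      have hmi : ∑ j : Fin n, m i j • (Pi.single j 1 : Fin n → R) = m i :=
        sum_single_smul R n (m i)
      calc ∑ j : Fin n, m i j • b' j
          = h' (pi (∑ j : Fin n, m i j • (Pi.single j 1 : Fin n → R))) := by
            rw [map_sum, map_sum]; simp [hb']
        _ = h' (pi (m i)) := by rw [hmi]
        _ = 0 := by rw [LinearMap.mem_ker.mp hmem, map_zero]
    have hdiff : ∀ j, ∃ aj : A, f aj = b j - b' j := by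
      intro j
      have hz : g (b j - b' j) = 0 := by rw [map_sub, hgb', sub_self]
      exact ((hfg (b j - b' j)).mp hz).imp fun aj haj => haj
    choose a' ha' using hdiff
    refine ⟨a', fun i => ?_⟩
    apply hfinj
    rw [hab i, map_sum]
    have hfs : ∀ j, f (m i j • a' j) = m i j • b j - m i j • b' j := by
      intro j; rw [map_smul, ha', smul_sub]
    rw [Finset.sum_congr rfl fun j _ => hfs j, Finset.sum_sub_distrib]
    rw [show ∑ j : Fin n, m i j • b' j = 0 from hrel i, sub_zero]
  -- now the tensor argument
  have hz : ∀ z, LinearMap.lTensor ((Fin k → R) ⧸ N) f z = 0 → z = 0 := by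
    intro z hz0
    obtain ⟨w, rfl⟩ := LinearMap.rTensor_surjective A (Submodule.mkQ_surjective N) z
    obtain ⟨a, rfl⟩ := piT_surjective R k A w
    have hnat : LinearMap.lTensor ((Fin k → R) ⧸ N) f ∘ₗ LinearMap.rTensor A N.mkQ
        = LinearMap.rTensor B N.mkQ ∘ₗ LinearMap.lTensor (Fin k → R) f := by
      rw [LinearMap.lTensor_comp_rTensor, LinearMap.rTensor_comp_lTensor]
    have h0 : LinearMap.rTensor B N.mkQ
        (LinearMap.lTensor (Fin k → R) f (piT R k A a)) = 0 := by
      have hcf := LinearMap.congr_fun hnat (piT R k A a)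
      simp only [LinearMap.comp_apply] at hcf
      rw [← hcf, hz0]
    have hexB : Function.Exact (LinearMap.rTensor B t) (LinearMap.rTensor B N.mkQ) :=
      rTensor_exact B hexact_tp (Submodule.mkQ_surjective N)
    obtain ⟨v, hv⟩ := (hexB _).mp h0
    obtain ⟨b, rfl⟩ := piT_surjective R n B v
    have hcomp : piT R k B (fun i => ∑ j : Fin n, m i j • b j)
        = piT R k B (fun i => f (a i)) := by
      rw [← piT_rTensor R k n m b, ← piT_lTensor R k f a, ← ht, hv]
    have hab : ∀ i, f (a i) = ∑ j : Fin n, m i j • b j := by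
      intro i
      have hcc := congrArg (coordT R k B i) hcomp
      rw [coordT_piT, coordT_piT] at hcc
      exact hcc.symm
    obtain ⟨a', ha'⟩ := key a b hab
    have hw : piT R k A a = LinearMap.rTensor A t (piT R n A a') := by
      rw [ht, piT_rTensor R k n m a']
      congr 1
      funext i
      exact ha' i
    rw [hw, ← LinearMap.comp_apply, ← LinearMap.rTensor_comp]
    have hpt : N.mkQ ∘ₗ t = 0 := by
      apply LinearMap.ext; intro x
      simp only [LinearMap.comp_apply, LinearMap.zero_apply]
      rw [← LinearMap.mem_ker, Submodule.ker_mkQ, ← hrange_t]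
      exact ⟨x, rfl⟩
    rw [hpt, LinearMap.rTensor_zero, LinearMap.zero_apply]
  intro x y hxy
  have hd := hz (x - y) (by rw [map_sub, hxy, sub_self])
  exact sub_eq_zero.mp hd

end Aux

section Main

open TensorProduct

variable [CommRing R]

/-- The standard "transpose" module attached to a matrix datum. -/
abbrev StdMod (d : Σ k : ℕ, Σ n : ℕ, Fin k → Fin n → R) : Type u :=
  (Fin d.1 → R) ⧸ Submodule.span R (Set.range fun j : Fin d.2.1 => fun i : Fin d.1 => d.2.2 i j)

lemma comp_symm_cancel {M N P : Type u} [AddCommGroup M] [Module R M]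
    [AddCommGroup N] [Module R N] [AddCommGroup P] [Module R P]
    (e : M ≃ₗ[R] N) (h : M →ₗ[R] P) :
    (h ∘ₗ e.symm.toLinearMap) ∘ₗ e.toLinearMap = h :=
  LinearMap.ext fun u => by
    rw [LinearMap.comp_apply, LinearMap.comp_apply, LinearEquiv.coe_coe,
      LinearEquiv.coe_coe, LinearEquiv.symm_apply_apply]

lemma warfield {S : Set (ModuleCat.{u} R)} (hR : ModuleCat.of R R ∈ S)
    {ι : Type u} [DecidableEq ι] (M : ι → Type u) [∀ i, AddCommGroup (M i)]
    [∀ i, Module R (M i)] {P : Type u} [AddCommGroup P] [Module R P]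
    (φ : ∀ i, M i →ₗ[R] P)
    (hcov : ∀ U ∈ S, ∀ h : (U : Type u) →ₗ[R] P,
      ∃ (i : ι) (ψ : (U : Type u) →ₗ[R] M i), φ i ∘ₗ ψ = h)
    (hP : IsSPureProjective S P) :
    ∃ σ : P →ₗ[R] DirectSum ι M,
      (DirectSum.toModule R ι P φ) ∘ₗ σ = LinearMap.id := by
  set pQ := DirectSum.toModule R ι P φ with hpQ
  have hlof : ∀ i, pQ ∘ₗ DirectSum.lof R ι M i = φ i :=
    fun i => LinearMap.ext fun u => DirectSum.toModule_lof R i u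
  have hlift : SPureLift S pQ := by
    intro U hU h
    obtain ⟨i, ψ, hiψ⟩ := hcov U hU h
    exact ⟨DirectSum.lof R ι M i ∘ₗ ψ, by rw [← LinearMap.comp_assoc, hlof, hiψ]⟩
  have hsurj : Function.Surjective pQ := by
    intro p0
    obtain ⟨h', hh'⟩ := hlift (ModuleCat.of R R) hR (LinearMap.toSpanSingleton R P p0)
    refine ⟨h' (show ↑(ModuleCat.of R R) from (1 : R)), ?_⟩
    have hcf := LinearMap.congr_fun hh' (show ↑(ModuleCat.of R R) from (1 : R))
    rw [LinearMap.comp_apply] at hcf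
    rw [hcf]
    exact one_smul R p0
  have hpe : IsSPureExact S (LinearMap.ker pQ).subtype pQ := by
    refine ⟨Submodule.injective_subtype _, hsurj, ?_, hlift⟩
    rw [LinearMap.exact_iff, Submodule.range_subtype]
  exact hP (LinearMap.ker pQ).subtype pQ hpe LinearMap.id

lemma flat_of_cover {ι : Type u} [DecidableEq ι] (M : ι → Type u) [∀ i, AddCommGroup (M i)]
    [∀ i, Module R (M i)] {P : Type u} [AddCommGroup P] [Module R P]
    {S : Set (ModuleCat.{u} R)} (hR : ModuleCat.of R R ∈ S)
    (φ : ∀ i, M i →ₗ[R] P)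
    (hcov : ∀ U ∈ S, ∀ h : (U : Type u) →ₗ[R] P,
      ∃ (i : ι) (ψ : (U : Type u) →ₗ[R] M i), φ i ∘ₗ ψ = h)
    (hP : IsSPureProjective S P)
    (hflat : ∀ (i : ι) ⦃A B C : Type u⦄ [AddCommGroup A] [Module R A] [AddCommGroup B]
      [Module R B] [AddCommGroup C] [Module R C] (f : A →ₗ[R] B) (g : B →ₗ[R] C),
      IsSPureExact S f g → Function.Injective (LinearMap.lTensor (M i) f)) :
    IsSPureFlat S P := by
  obtain ⟨σ, hσ⟩ := warfield hR M φ hcov hP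
  intro A B C _ _ _ _ _ _ f g hex
  exact lTensor_inj_of_retract R f σ (DirectSum.toModule R ι P φ) hσ
    (dsum_lTensor_inj R M f fun i => hflat i f g hex)

section Idx

variable (S : Set (ModuleCat.{u} R)) (P : Type u) [AddCommGroup P] [Module R P]

/-- The index type for the Warfield cover of `P`. -/
def Idx : Type u :=
  Σ d : {d : Σ k : ℕ, Σ n : ℕ, Fin k → Fin n → R //
    ∃ U ∈ S, Nonempty ((U : Type u) ≃ₗ[R] StdMod d)}, (StdMod d.1 →ₗ[R] P)

/-- The module family for the Warfield cover of `P`. -/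
def IdxMod (x : Idx S P) : Type u := StdMod x.1.1

instance (x : Idx S P) : AddCommGroup (IdxMod S P x) :=
  inferInstanceAs (AddCommGroup (StdMod x.1.1))

instance (x : Idx S P) : Module R (IdxMod S P x) :=
  inferInstanceAs (Module R (StdMod x.1.1))

/-- The structure map of the Warfield cover. -/
def idxHom (x : Idx S P) : IdxMod S P x →ₗ[R] P := x.2

lemma idxIso (x : Idx S P) :
    ∃ U ∈ S, Nonempty ((U : Type u) ≃ₗ[R] IdxMod S P x) := x.1.2

lemma idx_cov (htr : ∀ U ∈ S, ∃ V ∈ S, ∃ (k n : ℕ) (m : Fin k → (Fin n → R))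
      (π : (Fin n → R) →ₗ[R] V),
      Function.Surjective π ∧ LinearMap.ker π = Submodule.span R (Set.range m) ∧
      Nonempty ((U : Type u) ≃ₗ[R]
        ((Fin k → R) ⧸ Submodule.span R (Set.range fun j : Fin n => fun i : Fin k => m i j)))) :
    ∀ U ∈ S, ∀ h : (U : Type u) →ₗ[R] P,
      ∃ (i : Idx S P) (ψ : (U : Type u) →ₗ[R] IdxMod S P i), idxHom S P i ∘ₗ ψ = h := by
  intro U hU h
  obtain ⟨V, hV, k, n, m, pV, hpV, hkerV, ⟨e⟩⟩ := htr U hU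
  exact ⟨⟨⟨⟨k, n, m⟩, ⟨U, hU, ⟨e⟩⟩⟩, h ∘ₗ e.symm.toLinearMap⟩, e.toLinearMap,
    comp_symm_cancel e h⟩

lemma idx_flat (htr : ∀ U ∈ S, ∃ V ∈ S, ∃ (k n : ℕ) (m : Fin k → (Fin n → R))
      (π : (Fin n → R) →ₗ[R] V),
      Function.Surjective π ∧ LinearMap.ker π = Submodule.span R (Set.range m) ∧
      Nonempty ((U : Type u) ≃ₗ[R]
        ((Fin k → R) ⧸ Submodule.span R (Set.range fun j : Fin n => fun i : Fin k => m i j)))) :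
    ∀ (x : Idx S P) ⦃A B C : Type u⦄ [AddCommGroup A] [Module R A] [AddCommGroup B]
      [Module R B] [AddCommGroup C] [Module R C] (f : A →ₗ[R] B) (g : B →ₗ[R] C),
      IsSPureExact S f g → Function.Injective (LinearMap.lTensor (IdxMod S P x) f) := by
  intro x A B C _ _ _ _ _ _ f g hex
  obtain ⟨U, hU, ⟨e⟩⟩ := idxIso S P x
  obtain ⟨V, hV, k, n, m, pV, hpV, hkerV, ⟨e'⟩⟩ := htr U hU
  have hstd : Function.Injective (LinearMap.lTensor (StdMod ⟨k, n, m⟩) f) :=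
    std_inj R f g hex.1 hex.2.2.1 k n m pV hpV hkerV (hex.2.2.2 V hV)
  exact lTensor_inj_of_retract R f (e.symm.trans e').toLinearMap
    (e.symm.trans e').symm.toLinearMap
    (LinearMap.ext fun y => (e.symm.trans e').symm_apply_apply y) hstd

end Idx

end Main

/-- if `R` is commutative, `S` is a (set-presentable) class of finitely
presented modules containing `R` with `S ⊆ tr S`, then every `S`-pure projective module
is `S`-pure flat. -/
theorem stmt9 [CommRing R] (S : Set (ModuleCat.{u} R))
    (hR : ModuleCat.of R R ∈ S) (hfp : ∀ U ∈ S, Module.FinitePresentation R U)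
    (htr : ∀ U ∈ S, ∃ V ∈ S, ∃ (k n : ℕ) (m : Fin k → (Fin n → R))
        (π : (Fin n → R) →ₗ[R] V),
      Function.Surjective π ∧ LinearMap.ker π = Submodule.span R (Set.range m) ∧
      Nonempty ((U : Type u) ≃ₗ[R] ((Fin k → R) ⧸ Submodule.span R (Set.range fun j : Fin n => fun i : Fin k => m i j)))) :
    ∀ (P : Type u) [AddCommGroup P] [Module R P],
      IsSPureProjective S P → IsSPureFlat S P := by
  classical
  intro P _ _ hP
  exact flat_of_cover (IdxMod S P) hR (idxHom S P) (idx_cov S P htr) hP (idx_flat S P htr)
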